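/- (Proposition 1, Equation (jensen).) Let $R$ be an integrable random vector in $\mathbb{R}^K$ such that for every nonzero $a \in \mathbb{R}^K$ the scalar product $a \cdot R$ is not almost surely equal to $0$, let $U : \mathbb{R} \to \mathbb{R}$ be strictly concave and continuous, let $w_b \in \mathbb{R}^K$, $z \in \mathbb{R}^L$, and assume $U((w_b+\theta_0 z)\cdot R)$ is integrable for every $K \times L$ matrix $\theta_0$. Let $\theta$ be a random $K \times L$ real matrix, independent of $R$, with integrable entries, posterior mean $m = \mathbb{E}[\theta]$, such that the tilt vector $\theta z$ is not almost surely constant and such that $G(\theta)$ is integrable, where $G(\theta_0) = \mathbb{E}[U((w_b+\theta_0 z)\cdot R)]$. Then $\mathbb{E}[G(\theta)] < G(m)$. -/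

import Mathlib

open Matrix MeasureTheory ProbabilityTheory

/-- **Proposition 1, Equation (jensen).** With `R` an integrable random vector such
that `a ⬝ᵥ R` is not a.s. `0` for nonzero `a`, `U` strictly concave and continuous,
`G θ₀ = 𝔼[U ((w_b + θ₀ *ᵥ z) ⬝ᵥ R)]` integrable in all the required senses, and `θ` a random
`K × L` matrix independent of `R` with integrable entries, posterior mean `m`, whose tilt `θ *ᵥ z`
is not almost surely constant, one has the strict Jensen gap `𝔼[G (θ)] < G m`. -/
theorem ppp_overstates_expected_utility
    {Ω : Type*} [MeasurableSpace Ω] (μ : Measure Ω) [IsProbabilityMeasure μ]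
    {K L : ℕ} (R : Ω → Fin K → ℝ) (hRint : Integrable R μ)
    (hnd : ∀ a : Fin K → ℝ, a ≠ 0 → ¬ (∀ᵐ ω ∂μ, a ⬝ᵥ R ω = 0))
    (U : ℝ → ℝ) (hU : StrictConcaveOn ℝ Set.univ U) (hUcont : Continuous U)
    (w_b : Fin K → ℝ) (z : Fin L → ℝ)
    (hint : ∀ θ₀ : Matrix (Fin K) (Fin L) ℝ,
      Integrable (fun ω => U ((w_b + θ₀ *ᵥ z) ⬝ᵥ R ω)) μ)
    (θ : Ω → Matrix (Fin K) (Fin L) ℝ)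
    (hindep : IndepFun (fun ω => Matrix.of.symm (θ ω)) R μ)
    (hθint : ∀ k l, Integrable (fun ω => θ ω k l) μ)
    (m : Matrix (Fin K) (Fin L) ℝ) (hm : ∀ k l, m k l = ∫ ω, θ ω k l ∂μ)
    (hnc : ¬ ∃ c : Fin K → ℝ, ∀ᵐ ω ∂μ, θ ω *ᵥ z = c)
    (G : Matrix (Fin K) (Fin L) ℝ → ℝ)
    (hG : ∀ θ₀, G θ₀ = ∫ ω, U ((w_b + θ₀ *ᵥ z) ⬝ᵥ R ω) ∂μ)
    (hGint : Integrable (fun ω => G (θ ω)) μ) :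
    ∫ ω, G (θ ω) ∂μ < G m := by
  classical
  -- z ≠ 0, otherwise the tilt is a.s. constant 0
  have hz : z ≠ 0 := by
    rintro rfl
    exact hnc ⟨0, Filter.Eventually.of_forall fun ω => by simp⟩
  have hzz : (0:ℝ) < z ⬝ᵥ z := by
    have : z ⬝ᵥ z ≠ 0 := fun h => hz (by
      have := (dotProduct_self_eq_zero (v := z)).mp h
      exact this)
    have h0 : (0:ℝ) ≤ z ⬝ᵥ z := by
      simpa [dotProduct] using Finset.sum_nonneg fun l _ => mul_self_nonneg (z l)
    exact lt_of_le_of_ne h0 (Ne.symm this)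
  set g : (Fin K → ℝ) → ℝ := fun v => ∫ ω, U ((w_b + v) ⬝ᵥ R ω) ∂μ with hgdef
  -- every vector is a tilt of some matrix, hence integrability holds for all v
  have hintv : ∀ v : Fin K → ℝ, Integrable (fun ω => U ((w_b + v) ⬝ᵥ R ω)) μ := by
    intro v
    have := hint ((z ⬝ᵥ z)⁻¹ • Matrix.of fun k l => v k * z l)
    have hvz0 : (Matrix.of fun k l => v k * z l) *ᵥ z = (z ⬝ᵥ z) • v := by
      funext k
      simp only [Matrix.mulVec, Matrix.of_apply, dotProduct, Pi.smul_apply, smul_eq_mul]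
      rw [Finset.sum_mul]
      exact Finset.sum_congr rfl fun l _ => by ring
    have hvz : ((z ⬝ᵥ z)⁻¹ • Matrix.of fun k l => v k * z l) *ᵥ z = v := by
      rw [Matrix.smul_mulVec, hvz0, smul_smul, inv_mul_cancel₀ hzz.ne', one_smul]
    rwa [hvz] at this
  -- g is strictly concave
  have hgsc : StrictConcaveOn ℝ (Set.univ : Set (Fin K → ℝ)) g := by
    refine ⟨convex_univ, ?_⟩
    intro v _ v' _ hvv' a b ha hb hab
    set x : Ω → ℝ := fun ω => (w_b + v) ⬝ᵥ R ω
    set y : Ω → ℝ := fun ω => (w_b + v') ⬝ᵥ R ω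
    have hcombo : ∀ ω, (w_b + (a • v + b • v')) ⬝ᵥ R ω = a * x ω + b * y ω := by
      intro ω
      simp only [x, y, add_dotProduct, smul_dotProduct, smul_eq_mul]
      linear_combination (-(w_b ⬝ᵥ R ω)) * hab
    -- pointwise inequality
    have hpt : ∀ ω, a * U (x ω) + b * U (y ω) ≤ U ((w_b + (a • v + b • v')) ⬝ᵥ R ω) := by
      intro ω
      rw [hcombo ω]
      rcases eq_or_ne (x ω) (y ω) with h | h
      · have := hU.concaveOn.2 (Set.mem_univ (x ω)) (Set.mem_univ (y ω)) ha.le hb.le hab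
        simpa [smul_eq_mul] using this
      · exact (hU.2 (Set.mem_univ (x ω)) (Set.mem_univ (y ω)) h ha hb hab).le
    set h : Ω → ℝ := fun ω =>
      U ((w_b + (a • v + b • v')) ⬝ᵥ R ω) - (a * U (x ω) + b * U (y ω))
    have hi2 : Integrable (fun ω => a * U ((w_b + v) ⬝ᵥ R ω) + b * U ((w_b + v') ⬝ᵥ R ω)) μ :=
      ((hintv v).const_mul a).add ((hintv v').const_mul b)
    have hhint : Integrable h μ := (hintv _).sub hi2
    have hhnn : 0 ≤ h := fun ω => sub_nonneg.mpr (hpt ω)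
    have hpos : 0 < ∫ ω, h ω ∂μ := by
      rw [integral_pos_iff_support_of_nonneg hhnn hhint]
      have hsub : {ω | (v - v') ⬝ᵥ R ω ≠ 0} ⊆ Function.support h := by
        intro ω hω
        have hxy : x ω ≠ y ω := by
          intro hxyeq
          apply hω
          have hdiff : (v - v') ⬝ᵥ R ω = x ω - y ω := by
            simp only [x, y, sub_dotProduct, add_dotProduct]; ring
          show (v - v') ⬝ᵥ R ω = 0
          rw [hdiff, hxyeq, sub_self]
        have := hU.2 (Set.mem_univ (x ω)) (Set.mem_univ (y ω)) hxy ha hb hab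
        have : h ω ≠ 0 := by
          simp only [h]
          rw [hcombo ω]
          simp only [smul_eq_mul] at this
          linarith
        exact this
      have hne : μ {ω | (v - v') ⬝ᵥ R ω ≠ 0} ≠ 0 := by
        intro h0
        apply hnd (v - v') (sub_ne_zero.mpr hvv')
        rw [MeasureTheory.ae_iff]
        convert h0 using 2
      calc (0:ENNReal) < μ {ω | (v - v') ⬝ᵥ R ω ≠ 0} := by
            exact lt_of_le_of_ne zero_le (Ne.symm hne)
        _ ≤ μ (Function.support h) := measure_mono hsub
    have : ∫ ω, h ω ∂μ = g (a • v + b • v') - (a * g v + b * g v') := by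
      simp only [h, hgdef]
      rw [integral_sub (hintv _) hi2,
        integral_add ((hintv v).const_mul a) ((hintv v').const_mul b),
        integral_const_mul, integral_const_mul]
    rw [this] at hpos
    simp only [smul_eq_mul]
    linarith
  -- g is continuous
  have hgcont : ContinuousOn g (Set.univ : Set (Fin K → ℝ)) :=
    hgsc.concaveOn.continuousOn isOpen_univ
  -- the tilt process
  set f : Ω → (Fin K → ℝ) := fun ω => θ ω *ᵥ z with hfdef
  have hcoord : ∀ k, Integrable (fun ω => f ω k) μ := by
    intro k
    simp only [f, Matrix.mulVec, dotProduct]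
    exact integrable_finset_sum _ fun l _ => (hθint k l).mul_const (z l)
  have hcoordint : ∀ k, (∫ ω, f ω k ∂μ) = (m *ᵥ z) k := by
    intro k
    simp only [f, Matrix.mulVec, dotProduct]
    rw [integral_finset_sum _ fun l _ => (hθint k l).mul_const (z l)]
    refine Finset.sum_congr rfl fun l _ => ?_
    rw [integral_mul_const, hm]
  have hfeq : f = fun ω => ∑ k, f ω k • (Pi.single k 1 : Fin K → ℝ) := by
    funext ω j
    simp [Pi.single_apply, Finset.sum_ite_eq, eq_comm, mul_ite]
  have hfint : Integrable f μ := by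
    rw [hfeq]
    exact integrable_finset_sum _ fun k _ => (hcoord k).smul_const _
  have hgf : (fun ω => G (θ ω)) = g ∘ f := by
    funext ω; simp [hG, hgdef, f, Function.comp]
  have hgfi : Integrable (g ∘ f) μ := by rw [← hgf]; exact hGint
  have havg : ⨍ ω, f ω ∂μ = m *ᵥ z := by
    rw [average_eq_integral, hfeq,
      integral_finset_sum _ fun k _ => (hcoord k).smul_const _]
    simp only [integral_smul_const, hcoordint]
    funext j
    simp [Pi.single_apply, Finset.sum_ite_eq, mul_ite]
  rcases hgsc.ae_eq_const_or_lt_map_average hgcont isClosed_univ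
      (Filter.Eventually.of_forall fun ω => Set.mem_univ _) hfint hgfi with hc | hlt
  · exfalso
    apply hnc
    exact ⟨⨍ ω, f ω ∂μ, hc⟩
  · rw [havg] at hlt
    have h1 : ⨍ ω, g (f ω) ∂μ = ∫ ω, G (θ ω) ∂μ := by
      rw [average_eq_integral]; rw [hgf]; rfl
    have h2 : g (m *ᵥ z) = G m := (hG m).symm
    rwa [h1, h2] at hlt
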